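/- Let m be a positive integer and F a finite set of faces (unordered triples of distinct indices in Fin m) such that every edge index lies in at least one face and the graph on faces with adjacency given by sharing an edge is connected. Let u, ũ : Fin m → ℝ be admissible metrics (positive, and for each face the square roots satisfy the strict triangle inequalities). Then the cotangent edge weights agree, w_e(u) = w_e(ũ) for all e ∈ Fin m, if and only if there exists c > 0 with ũ_e = c · u_e for all e. -/

import Mathlib

set_option maxHeartbeats 1600000

section RigidityAux

lemma aux_nsd (x1 x2 x3 z1 z2 z3 : ℝ)
    (hx : 0 < 2*(x1*x2+x2*x3+x3*x1) - (x1^2+x2^2+x3^2))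
    (horth : (x1+x2+x3)*(z1+z2+z3) = 2*(x1*z1+x2*z2+x3*z3)) :
    2*(z1*z2+z2*z3+z3*z1) - (z1^2+z2^2+z3^2) ≤ 0 := by
  by_contra h
  push_neg at h
  have hL : (x1*z1+x2*z2+x3*z3)^2 ≤ (x1^2+x2^2+x3^2)*(z1^2+z2^2+z3^2) := by
    nlinarith [sq_nonneg (x1*z2-x2*z1), sq_nonneg (x1*z3-x3*z1), sq_nonneg (x2*z3-x3*z2)]
  have hP2 : 2*(x1^2+x2^2+x3^2) < (x1+x2+x3)^2 := by nlinarith []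
  have hS2 : 2*(z1^2+z2^2+z3^2) < (z1+z2+z3)^2 := by nlinarith []
  have hX2 : 0 < x1^2+x2^2+x3^2 := by
    nlinarith [sq_nonneg (x1-x2), sq_nonneg (x2-x3), sq_nonneg (x1-x3)]
  have hZ2 : (0:ℝ) ≤ z1^2+z2^2+z3^2 := by positivity
  have hS2pos : 0 < (z1+z2+z3)^2 := by linarith
  have c1 : 2*(x1^2+x2^2+x3^2)*(z1+z2+z3)^2 < (x1+x2+x3)^2*(z1+z2+z3)^2 :=
    mul_lt_mul_of_pos_right hP2 hS2pos
  have c2 : 2*(x1^2+x2^2+x3^2)*(2*(z1^2+z2^2+z3^2)) < 2*(x1^2+x2^2+x3^2)*(z1+z2+z3)^2 :=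
    mul_lt_mul_of_pos_left hS2 (by linarith)
  have c4 : ((x1+x2+x3)*(z1+z2+z3))^2 = 4*(x1*z1+x2*z2+x3*z3)^2 := by rw [horth]; ring
  have e1 : (x1+x2+x3)^2*(z1+z2+z3)^2 = ((x1+x2+x3)*(z1+z2+z3))^2 := by ring
  have e2 : 2*(x1^2+x2^2+x3^2)*(2*(z1^2+z2^2+z3^2)) = 4*((x1^2+x2^2+x3^2)*(z1^2+z2^2+z3^2)) := by
    ring
  linarith [c1, c2, c4, e1, e2, hL]

lemma aux_zero (x1 x2 x3 z1 z2 z3 : ℝ)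
    (hx : 0 < 2*(x1*x2+x2*x3+x3*x1) - (x1^2+x2^2+x3^2))
    (horth : (x1+x2+x3)*(z1+z2+z3) = 2*(x1*z1+x2*z2+x3*z3))
    (hzz : 2*(z1*z2+z2*z3+z3*z1) - (z1^2+z2^2+z3^2) = 0) :
    z1 = 0 ∧ z2 = 0 ∧ z3 = 0 := by
  have h : z1^2 + z2^2 + z3^2 ≤ 0 := by
    by_contra h
    push_neg at h
    have hL : (x1*z1+x2*z2+x3*z3)^2 ≤ (x1^2+x2^2+x3^2)*(z1^2+z2^2+z3^2) := by
      nlinarith [sq_nonneg (x1*z2-x2*z1), sq_nonneg (x1*z3-x3*z1), sq_nonneg (x2*z3-x3*z2)]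
    have hP2 : 2*(x1^2+x2^2+x3^2) < (x1+x2+x3)^2 := by nlinarith []
    have hS2 : 2*(z1^2+z2^2+z3^2) = (z1+z2+z3)^2 := by nlinarith []
    have hX2 : 0 < x1^2+x2^2+x3^2 := by
      nlinarith [sq_nonneg (x1-x2), sq_nonneg (x2-x3), sq_nonneg (x1-x3)]
    have hS2pos : 0 < (z1+z2+z3)^2 := by linarith
    have c1 : 2*(x1^2+x2^2+x3^2)*(z1+z2+z3)^2 < (x1+x2+x3)^2*(z1+z2+z3)^2 :=
      mul_lt_mul_of_pos_right hP2 hS2pos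
    have c2 : 2*(x1^2+x2^2+x3^2)*(z1+z2+z3)^2 = 4*((x1^2+x2^2+x3^2)*(z1^2+z2^2+z3^2)) := by
      rw [← hS2]; ring
    have c4 : ((x1+x2+x3)*(z1+z2+z3))^2 = 4*(x1*z1+x2*z2+x3*z3)^2 := by rw [horth]; ring
    have e1 : (x1+x2+x3)^2*(z1+z2+z3)^2 = ((x1+x2+x3)*(z1+z2+z3))^2 := by ring
    linarith [c1, c2, c4, e1, hL]
  have h1 : z1 = 0 := by nlinarith [sq_nonneg z1, sq_nonneg z2, sq_nonneg z3]
  have h2 : z2 = 0 := by nlinarith [sq_nonneg z1, sq_nonneg z2, sq_nonneg z3]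
  have h3 : z3 = 0 := by nlinarith [sq_nonneg z1, sq_nonneg z2, sq_nonneg z3]
  exact ⟨h1, h2, h3⟩

lemma revCS (x1 x2 x3 y1 y2 y3 : ℝ)
    (hx : 0 < 2*(x1*x2+x2*x3+x3*x1) - (x1^2+x2^2+x3^2)) :
    (2*(x1*x2+x2*x3+x3*x1) - (x1^2+x2^2+x3^2)) *
      (2*(y1*y2+y2*y3+y3*y1) - (y1^2+y2^2+y3^2)) ≤
    ((x1+x2+x3)*(y1+y2+y3) - 2*(x1*y1+x2*y2+x3*y3))^2 := by
  set Bxx := 2*(x1*x2+x2*x3+x3*x1) - (x1^2+x2^2+x3^2) with hBxx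
  set Bxy := (x1+x2+x3)*(y1+y2+y3) - 2*(x1*y1+x2*y2+x3*y3) with hBxy
  have horth : (x1+x2+x3)*((Bxx*y1-Bxy*x1)+(Bxx*y2-Bxy*x2)+(Bxx*y3-Bxy*x3)) =
      2*(x1*(Bxx*y1-Bxy*x1)+x2*(Bxx*y2-Bxy*x2)+x3*(Bxx*y3-Bxy*x3)) := by
    rw [hBxx, hBxy]; ring
  have h := aux_nsd x1 x2 x3 (Bxx*y1-Bxy*x1) (Bxx*y2-Bxy*x2) (Bxx*y3-Bxy*x3) hx horth
  have hid : 2*((Bxx*y1-Bxy*x1)*(Bxx*y2-Bxy*x2)+(Bxx*y2-Bxy*x2)*(Bxx*y3-Bxy*x3)+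
      (Bxx*y3-Bxy*x3)*(Bxx*y1-Bxy*x1)) -
      ((Bxx*y1-Bxy*x1)^2+(Bxx*y2-Bxy*x2)^2+(Bxx*y3-Bxy*x3)^2) =
      Bxx * (Bxx * (2*(y1*y2+y2*y3+y3*y1) - (y1^2+y2^2+y3^2)) - Bxy^2) := by
    rw [hBxx, hBxy]; ring
  rw [hid] at h
  nlinarith [h, hx]

lemma revCS_eq (x1 x2 x3 y1 y2 y3 : ℝ)
    (hx : 0 < 2*(x1*x2+x2*x3+x3*x1) - (x1^2+x2^2+x3^2))
    (heq : (2*(x1*x2+x2*x3+x3*x1) - (x1^2+x2^2+x3^2)) *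
      (2*(y1*y2+y2*y3+y3*y1) - (y1^2+y2^2+y3^2)) =
    ((x1+x2+x3)*(y1+y2+y3) - 2*(x1*y1+x2*y2+x3*y3))^2) :
    (2*(x1*x2+x2*x3+x3*x1) - (x1^2+x2^2+x3^2)) * y1 =
      ((x1+x2+x3)*(y1+y2+y3) - 2*(x1*y1+x2*y2+x3*y3)) * x1 ∧
    (2*(x1*x2+x2*x3+x3*x1) - (x1^2+x2^2+x3^2)) * y2 =
      ((x1+x2+x3)*(y1+y2+y3) - 2*(x1*y1+x2*y2+x3*y3)) * x2 ∧
    (2*(x1*x2+x2*x3+x3*x1) - (x1^2+x2^2+x3^2)) * y3 =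
      ((x1+x2+x3)*(y1+y2+y3) - 2*(x1*y1+x2*y2+x3*y3)) * x3 := by
  set Bxx := 2*(x1*x2+x2*x3+x3*x1) - (x1^2+x2^2+x3^2) with hBxx
  set Bxy := (x1+x2+x3)*(y1+y2+y3) - 2*(x1*y1+x2*y2+x3*y3) with hBxy
  have horth : (x1+x2+x3)*((Bxx*y1-Bxy*x1)+(Bxx*y2-Bxy*x2)+(Bxx*y3-Bxy*x3)) =
      2*(x1*(Bxx*y1-Bxy*x1)+x2*(Bxx*y2-Bxy*x2)+x3*(Bxx*y3-Bxy*x3)) := by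
    rw [hBxx, hBxy]; ring
  have hzz : 2*((Bxx*y1-Bxy*x1)*(Bxx*y2-Bxy*x2)+(Bxx*y2-Bxy*x2)*(Bxx*y3-Bxy*x3)+
      (Bxx*y3-Bxy*x3)*(Bxx*y1-Bxy*x1)) -
      ((Bxx*y1-Bxy*x1)^2+(Bxx*y2-Bxy*x2)^2+(Bxx*y3-Bxy*x3)^2) = 0 := by
    have hid : 2*((Bxx*y1-Bxy*x1)*(Bxx*y2-Bxy*x2)+(Bxx*y2-Bxy*x2)*(Bxx*y3-Bxy*x3)+
        (Bxx*y3-Bxy*x3)*(Bxx*y1-Bxy*x1)) -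
        ((Bxx*y1-Bxy*x1)^2+(Bxx*y2-Bxy*x2)^2+(Bxx*y3-Bxy*x3)^2) =
        Bxx * (Bxx * (2*(y1*y2+y2*y3+y3*y1) - (y1^2+y2^2+y3^2)) - Bxy^2) := by
      rw [hBxx, hBxy]; ring
    rw [hid]
    have : Bxx * (2*(y1*y2+y2*y3+y3*y1) - (y1^2+y2^2+y3^2)) - Bxy^2 = 0 := by
      rw [hBxx, hBxy]; linear_combination heq
    rw [this, mul_zero]
  obtain ⟨h1, h2, h3⟩ := aux_zero x1 x2 x3 _ _ _ hx horth hzz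
  exact ⟨by linarith, by linarith, by linarith⟩

lemma Bxy_pos (x1 x2 x3 y1 y2 y3 : ℝ)
    (hx1 : 0 < x1) (hx2 : 0 < x2) (hx3 : 0 < x3)
    (hy1 : 0 < y1) (hy2 : 0 < y2) (hy3 : 0 < y3)
    (hx : 0 < 2*(x1*x2+x2*x3+x3*x1) - (x1^2+x2^2+x3^2))
    (hy : 0 < 2*(y1*y2+y2*y3+y3*y1) - (y1^2+y2^2+y3^2)) :
    0 < (x1+x2+x3)*(y1+y2+y3) - 2*(x1*y1+x2*y2+x3*y3) := by
  have hL : (x1*y1+x2*y2+x3*y3)^2 ≤ (x1^2+x2^2+x3^2)*(y1^2+y2^2+y3^2) := by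
    nlinarith [sq_nonneg (x1*y2-x2*y1), sq_nonneg (x1*y3-x3*y1), sq_nonneg (x2*y3-x3*y2)]
  have hP2 : 2*(x1^2+x2^2+x3^2) < (x1+x2+x3)^2 := by nlinarith []
  have hS2 : 2*(y1^2+y2^2+y3^2) < (y1+y2+y3)^2 := by nlinarith []
  have hX2 : 0 < x1^2+x2^2+x3^2 := by positivity
  have hY2 : 0 < y1^2+y2^2+y3^2 := by positivity
  have hS2pos : 0 < (y1+y2+y3)^2 := by positivity
  have c1 : 2*(x1^2+x2^2+x3^2)*(y1+y2+y3)^2 < (x1+x2+x3)^2*(y1+y2+y3)^2 :=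
    mul_lt_mul_of_pos_right hP2 hS2pos
  have c2 : 2*(x1^2+x2^2+x3^2)*(2*(y1^2+y2^2+y3^2)) < 2*(x1^2+x2^2+x3^2)*(y1+y2+y3)^2 :=
    mul_lt_mul_of_pos_left hS2 (by linarith)
  have hd : (2*(x1*y1+x2*y2+x3*y3))^2 < ((x1+x2+x3)*(y1+y2+y3))^2 := by nlinarith [c1, c2, hL]
  have hPS : 0 < (x1+x2+x3)*(y1+y2+y3) := by positivity
  nlinarith [hd, hPS]

lemma B_ge (x1 x2 x3 y1 y2 y3 sx sy : ℝ)
    (hx1 : 0 < x1) (hx2 : 0 < x2) (hx3 : 0 < x3)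
    (hy1 : 0 < y1) (hy2 : 0 < y2) (hy3 : 0 < y3)
    (hsx : 0 < sx) (hsy : 0 < sy)
    (hsx2 : sx^2 = 2*(x1*x2+x2*x3+x3*x1) - (x1^2+x2^2+x3^2))
    (hsy2 : sy^2 = 2*(y1*y2+y2*y3+y3*y1) - (y1^2+y2^2+y3^2)) :
    sx * sy ≤ (x1+x2+x3)*(y1+y2+y3) - 2*(x1*y1+x2*y2+x3*y3) := by
  have hx : 0 < 2*(x1*x2+x2*x3+x3*x1) - (x1^2+x2^2+x3^2) := by rw [← hsx2]; positivity
  have hy : 0 < 2*(y1*y2+y2*y3+y3*y1) - (y1^2+y2^2+y3^2) := by rw [← hsy2]; positivity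
  have hB := Bxy_pos x1 x2 x3 y1 y2 y3 hx1 hx2 hx3 hy1 hy2 hy3 hx hy
  have h2 := revCS x1 x2 x3 y1 y2 y3 hx
  rw [← hsx2, ← hsy2] at h2
  nlinarith [h2, hB, mul_pos hsx hsy]

lemma face_T_expand (x1 x2 x3 y1 y2 y3 sx sy : ℝ) (hsx : sx ≠ 0) (hsy : sy ≠ 0)
    (hsx2 : sx^2 = 2*(x1*x2+x2*x3+x3*x1) - (x1^2+x2^2+x3^2))
    (hsy2 : sy^2 = 2*(y1*y2+y2*y3+y3*y1) - (y1^2+y2^2+y3^2)) :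
    ((x2+x3-x1)/sx - (y2+y3-y1)/sy)*(x1-y1) + ((x1+x3-x2)/sx - (y1+y3-y2)/sy)*(x2-y2)
      + ((x1+x2-x3)/sx - (y1+y2-y3)/sy)*(x3-y3)
    = sx + sy - ((x1+x2+x3)*(y1+y2+y3) - 2*(x1*y1+x2*y2+x3*y3))/sx
        - ((x1+x2+x3)*(y1+y2+y3) - 2*(x1*y1+x2*y2+x3*y3))/sy := by
  field_simp
  linear_combination (-sy) * hsx2 + (-sx) * hsy2

lemma face_T_nonpos (x1 x2 x3 y1 y2 y3 sx sy : ℝ)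
    (hx1 : 0 < x1) (hx2 : 0 < x2) (hx3 : 0 < x3)
    (hy1 : 0 < y1) (hy2 : 0 < y2) (hy3 : 0 < y3)
    (hsx : 0 < sx) (hsy : 0 < sy)
    (hsx2 : sx^2 = 2*(x1*x2+x2*x3+x3*x1) - (x1^2+x2^2+x3^2))
    (hsy2 : sy^2 = 2*(y1*y2+y2*y3+y3*y1) - (y1^2+y2^2+y3^2)) :
    ((x2+x3-x1)/sx - (y2+y3-y1)/sy)*(x1-y1) + ((x1+x3-x2)/sx - (y1+y3-y2)/sy)*(x2-y2)
      + ((x1+x2-x3)/sx - (y1+y2-y3)/sy)*(x3-y3) ≤ 0 := by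
  rw [face_T_expand x1 x2 x3 y1 y2 y3 sx sy hsx.ne' hsy.ne' hsx2 hsy2]
  have hB := B_ge x1 x2 x3 y1 y2 y3 sx sy hx1 hx2 hx3 hy1 hy2 hy3 hsx hsy hsx2 hsy2
  have h1 : sx ≤ ((x1+x2+x3)*(y1+y2+y3) - 2*(x1*y1+x2*y2+x3*y3))/sy :=
    (le_div_iff₀ hsy).mpr hB
  have h2 : sy ≤ ((x1+x2+x3)*(y1+y2+y3) - 2*(x1*y1+x2*y2+x3*y3))/sx :=
    (le_div_iff₀ hsx).mpr (by linarith [hB, mul_comm sx sy])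
  linarith

lemma face_T_eq (x1 x2 x3 y1 y2 y3 sx sy : ℝ)
    (hx1 : 0 < x1) (hx2 : 0 < x2) (hx3 : 0 < x3)
    (hy1 : 0 < y1) (hy2 : 0 < y2) (hy3 : 0 < y3)
    (hsx : 0 < sx) (hsy : 0 < sy)
    (hsx2 : sx^2 = 2*(x1*x2+x2*x3+x3*x1) - (x1^2+x2^2+x3^2))
    (hsy2 : sy^2 = 2*(y1*y2+y2*y3+y3*y1) - (y1^2+y2^2+y3^2))
    (hT : ((x2+x3-x1)/sx - (y2+y3-y1)/sy)*(x1-y1) + ((x1+x3-x2)/sx - (y1+y3-y2)/sy)*(x2-y2)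
      + ((x1+x2-x3)/sx - (y1+y2-y3)/sy)*(x3-y3) = 0) :
    ∃ α : ℝ, 0 < α ∧ y1 = α * x1 ∧ y2 = α * x2 ∧ y3 = α * x3 := by
  rw [face_T_expand x1 x2 x3 y1 y2 y3 sx sy hsx.ne' hsy.ne' hsx2 hsy2] at hT
  have hB := B_ge x1 x2 x3 y1 y2 y3 sx sy hx1 hx2 hx3 hy1 hy2 hy3 hsx hsy hsx2 hsy2
  have h1 : sx ≤ ((x1+x2+x3)*(y1+y2+y3) - 2*(x1*y1+x2*y2+x3*y3))/sy :=
    (le_div_iff₀ hsy).mpr hB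
  have h2 : sy ≤ ((x1+x2+x3)*(y1+y2+y3) - 2*(x1*y1+x2*y2+x3*y3))/sx :=
    (le_div_iff₀ hsx).mpr (by linarith [hB, mul_comm sx sy])
  have h1' : sx = ((x1+x2+x3)*(y1+y2+y3) - 2*(x1*y1+x2*y2+x3*y3))/sy := by linarith
  have hBeq : (x1+x2+x3)*(y1+y2+y3) - 2*(x1*y1+x2*y2+x3*y3) = sx * sy := by
    field_simp at h1'
    linarith [h1']
  have hx : 0 < 2*(x1*x2+x2*x3+x3*x1) - (x1^2+x2^2+x3^2) := by rw [← hsx2]; positivity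
  have heq : (2*(x1*x2+x2*x3+x3*x1) - (x1^2+x2^2+x3^2)) *
      (2*(y1*y2+y2*y3+y3*y1) - (y1^2+y2^2+y3^2)) =
      ((x1+x2+x3)*(y1+y2+y3) - 2*(x1*y1+x2*y2+x3*y3))^2 := by
    rw [hBeq, ← hsx2, ← hsy2]; ring
  obtain ⟨e1, e2, e3⟩ := revCS_eq x1 x2 x3 y1 y2 y3 hx heq
  have hBpos : 0 < (x1+x2+x3)*(y1+y2+y3) - 2*(x1*y1+x2*y2+x3*y3) := by
    rw [hBeq]; positivity
  refine ⟨((x1+x2+x3)*(y1+y2+y3) - 2*(x1*y1+x2*y2+x3*y3)) /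
      (2*(x1*x2+x2*x3+x3*x1) - (x1^2+x2^2+x3^2)), by positivity, ?_, ?_, ?_⟩ <;>
    · rw [div_mul_eq_mul_div, eq_div_iff hx.ne']
      linarith [e1, e2, e3]

lemma tri_Q_pos (a b c : ℝ) (ha : 0 < a) (hb : 0 < b) (hc : 0 < c)
    (t1 : Real.sqrt (2*a) < Real.sqrt (2*b) + Real.sqrt (2*c))
    (t2 : Real.sqrt (2*b) < Real.sqrt (2*a) + Real.sqrt (2*c))
    (t3 : Real.sqrt (2*c) < Real.sqrt (2*a) + Real.sqrt (2*b)) :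
    0 < 2*(a*b+b*c+c*a) - (a^2+b^2+c^2) := by
  have da2 : Real.sqrt (2*a) ^ 2 = 2*a := Real.sq_sqrt (by linarith)
  have db2 : Real.sqrt (2*b) ^ 2 = 2*b := Real.sq_sqrt (by linarith)
  have dc2 : Real.sqrt (2*c) ^ 2 = 2*c := Real.sq_sqrt (by linarith)
  set da := Real.sqrt (2*a)
  set db := Real.sqrt (2*b)
  set dc := Real.sqrt (2*c)
  have hda : 0 < da := Real.sqrt_pos.mpr (by linarith)
  have hdb : 0 < db := Real.sqrt_pos.mpr (by linarith)
  have hdc : 0 < dc := Real.sqrt_pos.mpr (by linarith)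
  have key : 4*(2*(a*b+b*c+c*a) - (a^2+b^2+c^2)) =
      (da+db+dc)*((-da+db+dc)*((da-db+dc)*(da+db-dc))) := by
    have e1 : a = da^2/2 := by rw [da2]; ring
    have e2 : b = db^2/2 := by rw [db2]; ring
    have e3 : c = dc^2/2 := by rw [dc2]; ring
    rw [e1, e2, e3]; ring
  have p : 0 < (da+db+dc)*((-da+db+dc)*((da-db+dc)*(da+db-dc))) := by
    apply mul_pos (by linarith)
    apply mul_pos (by linarith)
    exact mul_pos (by linarith) (by linarith)
  linarith [key, p]

end RigidityAux

/-- `u` is an admissible metric: `u_e > 0` for every edge, and on each face the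
lengths `d_e = √(2 u_e)` satisfy the strict triangle inequalities. -/
def AdmissibleMetric (m : ℕ) (F : Finset (Finset (Fin m))) (u : Fin m → ℝ) : Prop :=
  (∀ e, 0 < u e) ∧
  ∀ f ∈ F, ∀ i ∈ f, ∀ j ∈ f, ∀ k ∈ f, i ≠ j → i ≠ k → j ≠ k →
    Real.sqrt (2 * u i) < Real.sqrt (2 * u j) + Real.sqrt (2 * u k)

/-- The angle opposite edge `e` in face `f`, determined by the law of cosines:
`cos θ_i = (d_j² + d_k² − d_i²)/(2 d_j d_k)` where `{j,k} = f \ {e}` and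
`d_a = √(2 u_a)` (so `d_a² = 2 u_a`). -/
noncomputable def faceAngle (m : ℕ) (u : Fin m → ℝ) (f : Finset (Fin m)) (e : Fin m) : ℝ :=
  Real.arccos ((∑ a ∈ f.erase e, 2 * u a - 2 * u e) /
    (2 * ∏ a ∈ f.erase e, Real.sqrt (2 * u a)))

/-- The cotangent edge weight `w_e(u) = (1/2) Σ_{f ∈ F, e ∈ f} cot θ_e^f`. -/
noncomputable def cotWeight (m : ℕ) (F : Finset (Finset (Fin m)))
    (u : Fin m → ℝ) (e : Fin m) : ℝ :=
  (1 / 2) * ∑ f ∈ F.filter (fun f => e ∈ f), Real.cot (faceAngle m u f e)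

/-- The adjacency graph on the faces: two faces are adjacent when they are
distinct and share an edge index. -/
def faceGraph (m : ℕ) (F : Finset (Finset (Fin m))) :
    SimpleGraph {f : Finset (Fin m) // f ∈ F} where
  Adj a b := a ≠ b ∧ ((a : Finset (Fin m)) ∩ (b : Finset (Fin m))).Nonempty
  symm := by
    constructor
    rintro a b ⟨hab, hint⟩
    exact ⟨hab.symm, by rwa [Finset.inter_comm]⟩
  loopless := by
    constructor
    rintro a ⟨hne, -⟩
    exact hne rfl

section Bridge

lemma cot_formula (m : ℕ) (u : Fin m → ℝ) (e j k : Fin m)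
    (hej : e ≠ j) (hek : e ≠ k) (hjk : j ≠ k)
    (ha : 0 < u e) (hb : 0 < u j) (hc : 0 < u k)
    (t1 : Real.sqrt (2*u e) < Real.sqrt (2*u j) + Real.sqrt (2*u k))
    (t2 : Real.sqrt (2*u j) < Real.sqrt (2*u e) + Real.sqrt (2*u k))
    (t3 : Real.sqrt (2*u k) < Real.sqrt (2*u e) + Real.sqrt (2*u j)) :
    Real.cot (faceAngle m u {e, j, k} e) =
      (u j + u k - u e) /
        Real.sqrt (2*(u e*u j + u j*u k + u k*u e) - ((u e)^2+(u j)^2+(u k)^2)) := by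
  have herase : ({e, j, k} : Finset (Fin m)).erase e = {j, k} := by
    rw [Finset.erase_insert (by simp [hej, hek])]
  rw [faceAngle, herase]
  rw [Finset.sum_pair hjk, Finset.prod_pair hjk]
  set a := u e; set b := u j; set c := u k
  set Q := 2*(a*b+b*c+c*a) - (a^2+b^2+c^2) with hQdef
  have hQ : 0 < Q := tri_Q_pos a b c ha hb hc t1 t2 t3
  set P := Real.sqrt (2*b) * Real.sqrt (2*c) with hPdef
  have hP : 0 < P := mul_pos (Real.sqrt_pos.mpr (by linarith)) (Real.sqrt_pos.mpr (by linarith))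
  have hP2 : P^2 = 4*(b*c) := by
    rw [hPdef, mul_pow, Real.sq_sqrt (by linarith), Real.sq_sqrt (by linarith)]; ring
  set x := (2*b + 2*c - 2*a) / (2*P) with hxdef
  have hbc : (0:ℝ) < 4*(b*c) := by positivity
  have hone : 1 - x^2 = Q / (4*(b*c)) := by
    rw [hxdef, div_pow]
    rw [show (2*P)^2 = 4 * P^2 by ring, hP2]
    rw [hQdef]
    field_simp
    ring
  have hx21 : x^2 < 1 := by
    have : 0 < Q / (4*(b*c)) := by positivity
    linarith
  have hxle : -1 ≤ x := by nlinarith [sq_nonneg (x+1)]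
  have hxge : x ≤ 1 := by nlinarith [sq_nonneg (x-1)]
  rw [Real.cot_eq_cos_div_sin, Real.cos_arccos hxle hxge, Real.sin_arccos]
  rw [show (1 - x^2) = Q / (4*(b*c)) from hone]
  rw [Real.sqrt_div hQ.le]
  rw [div_div_eq_mul_div]
  have hPs : Real.sqrt (4*(b*c)) = P := by
    rw [hPdef, ← Real.sqrt_mul (by positivity)]
    congr 1; ring
  congr 1
  rw [hPs, hxdef]
  field_simp

lemma face_decomp {m : ℕ} (f : Finset (Fin m)) (hf : f.card = 3) :
    ∃ i j k : Fin m, i ≠ j ∧ i ≠ k ∧ j ≠ k ∧ f = {i, j, k} :=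
  Finset.card_eq_three.mp hf

lemma perm213 {m : ℕ} (i j k : Fin m) : ({i, j, k} : Finset (Fin m)) = {j, i, k} := by
  ext x; simp only [Finset.mem_insert, Finset.mem_singleton]; tauto

lemma perm312 {m : ℕ} (i j k : Fin m) : ({i, j, k} : Finset (Fin m)) = {k, i, j} := by
  ext x; simp only [Finset.mem_insert, Finset.mem_singleton]; tauto

lemma scale_faceAngle (m : ℕ) (u v : Fin m → ℝ) (c : ℝ) (hc : 0 < c)
    (hvc : ∀ e, v e = c * u e) (i j k e : Fin m)
    (hij : i ≠ j) (hik : i ≠ k) (hjk : j ≠ k) (he : e ∈ ({i,j,k} : Finset (Fin m))) :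
    faceAngle m v {i,j,k} e = faceAngle m u {i,j,k} e := by
  -- reduce to the case e = i by permuting
  have main : ∀ a b d : Fin m, a ≠ b → a ≠ d → b ≠ d →
      faceAngle m v {a,b,d} a = faceAngle m u {a,b,d} a := by
    intro a b d hab had hbd
    have herase : ({a, b, d} : Finset (Fin m)).erase a = {b, d} := by
      rw [Finset.erase_insert (by simp [hab, had])]
    rw [faceAngle, faceAngle, herase]
    simp only [Finset.sum_pair hbd, Finset.prod_pair hbd]
    have hnum : 2 * v b + 2 * v d - 2 * v a = c * (2 * u b + 2 * u d - 2 * u a) := by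
      rw [hvc, hvc, hvc]; ring
    have hsq : ∀ w : Fin m, Real.sqrt (2 * v w) = Real.sqrt c * Real.sqrt (2 * u w) := by
      intro w
      rw [hvc, show (2:ℝ) * (c * u w) = c * (2 * u w) by ring, Real.sqrt_mul hc.le]
    have hden : 2 * (Real.sqrt (2 * v b) * Real.sqrt (2 * v d)) =
        c * (2 * (Real.sqrt (2 * u b) * Real.sqrt (2 * u d))) := by
      rw [hsq b, hsq d,
        show Real.sqrt c * Real.sqrt (2*u b) * (Real.sqrt c * Real.sqrt (2*u d))
          = (Real.sqrt c * Real.sqrt c) * (Real.sqrt (2*u b) * Real.sqrt (2*u d)) by ring,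
        Real.mul_self_sqrt hc.le]
      ring
    rw [hnum, hden, mul_div_mul_left _ _ hc.ne']
  simp only [Finset.mem_insert, Finset.mem_singleton] at he
  rcases he with rfl | rfl | rfl
  · exact main e j k hij hik hjk
  · rw [perm213 i e k]; exact main e i k hij.symm hjk hik
  · rw [perm312 i j e]; exact main e i j hik.symm hjk.symm hij

end Bridge

/-- Global Rigidity Theorem. On a connected triangulated surface,
two admissible metrics have the same cotangent edge weights if and only if they
differ by a positive scaling. -/
theorem global_rigidity (m : ℕ) (hm : 0 < m)
    (F : Finset (Finset (Fin m))) (hF : ∀ f ∈ F, f.card = 3)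
    (hcover : ∀ e : Fin m, ∃ f ∈ F, e ∈ f)
    (hconn : (faceGraph m F).Connected)
    (u v : Fin m → ℝ)
    (hu : AdmissibleMetric m F u) (hv : AdmissibleMetric m F v) :
    (∀ e : Fin m, cotWeight m F u e = cotWeight m F v e) ↔
      ∃ c : ℝ, 0 < c ∧ ∀ e, v e = c * u e := by
  constructor
  · intro hw
    set g : Finset (Fin m) → Fin m → ℝ := fun f e =>
      (Real.cot (faceAngle m u f e) - Real.cot (faceAngle m v f e)) * (u e - v e) with hg
    have hWe : ∀ e : Fin m,
        ∑ f ∈ F.filter (fun f => e ∈ f), Real.cot (faceAngle m u f e)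
          = ∑ f ∈ F.filter (fun f => e ∈ f), Real.cot (faceAngle m v f e) := by
      intro e
      have h := hw e
      rw [cotWeight, cotWeight] at h
      linarith
    have hsum : ∑ f ∈ F, ∑ e ∈ f, g f e = 0 := by
      have h1 : ∀ f ∈ F, ∑ e ∈ f, g f e = ∑ e ∈ Finset.univ, if e ∈ f then g f e else 0 := by
        intro f _
        rw [Finset.sum_ite_mem, Finset.univ_inter]
      rw [Finset.sum_congr rfl h1, Finset.sum_comm]
      apply Finset.sum_eq_zero
      intro e _
      rw [← Finset.sum_filter]
      have h2 : ∑ f ∈ F.filter (fun f => e ∈ f), g f e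
          = (∑ f ∈ F.filter (fun f => e ∈ f), Real.cot (faceAngle m u f e)) * (u e - v e)
            - (∑ f ∈ F.filter (fun f => e ∈ f), Real.cot (faceAngle m v f e)) * (u e - v e) := by
        rw [Finset.sum_mul, Finset.sum_mul, ← Finset.sum_sub_distrib]
        apply Finset.sum_congr rfl
        intro f _
        rw [hg]; ring
      rw [h2, hWe e, sub_self]
    -- structure data for each face
    have hkey : ∀ f ∈ F, (∑ e ∈ f, g f e ≤ 0) ∧
        (∑ e ∈ f, g f e = 0 → ∃ α : ℝ, 0 < α ∧ ∀ e ∈ f, v e = α * u e) := by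
      intro f hfF
      obtain ⟨i, j, k, hij, hik, hjk, rfl⟩ := face_decomp f (hF f hfF)
      have hi : i ∈ ({i,j,k} : Finset (Fin m)) := by simp
      have hj : j ∈ ({i,j,k} : Finset (Fin m)) := by simp
      have hk : k ∈ ({i,j,k} : Finset (Fin m)) := by simp
      -- triangle inequalities
      have tu1 := hu.2 _ hfF i hi j hj k hk hij hik hjk
      have tu2 := hu.2 _ hfF j hj i hi k hk hij.symm hjk hik
      have tu3 := hu.2 _ hfF k hk i hi j hj hik.symm hjk.symm hij
      have tv1 := hv.2 _ hfF i hi j hj k hk hij hik hjk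
      have tv2 := hv.2 _ hfF j hj i hi k hk hij.symm hjk hik
      have tv3 := hv.2 _ hfF k hk i hi j hj hik.symm hjk.symm hij
      have tu1' := hu.2 _ hfF i hi k hk j hj hik hij hjk.symm
      have tu2' := hu.2 _ hfF j hj k hk i hi hjk hij.symm hik.symm
      have tu3' := hu.2 _ hfF k hk j hj i hi hjk.symm hik.symm hij.symm
      have tv1' := hv.2 _ hfF i hi k hk j hj hik hij hjk.symm
      have tv2' := hv.2 _ hfF j hj k hk i hi hjk hij.symm hik.symm
      have tv3' := hv.2 _ hfF k hk j hj i hi hjk.symm hik.symm hij.symm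
      have hQu : 0 < 2*(u i*u j + u j*u k + u k*u i) - ((u i)^2+(u j)^2+(u k)^2) :=
        tri_Q_pos (u i) (u j) (u k) (hu.1 i) (hu.1 j) (hu.1 k) tu1 tu2 tu3
      have hQv : 0 < 2*(v i*v j + v j*v k + v k*v i) - ((v i)^2+(v j)^2+(v k)^2) :=
        tri_Q_pos (v i) (v j) (v k) (hv.1 i) (hv.1 j) (hv.1 k) tv1 tv2 tv3
      set su := Real.sqrt (2*(u i*u j + u j*u k + u k*u i) - ((u i)^2+(u j)^2+(u k)^2)) with hsu
      set sv := Real.sqrt (2*(v i*v j + v j*v k + v k*v i) - ((v i)^2+(v j)^2+(v k)^2)) with hsv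
      have hsupos : 0 < su := Real.sqrt_pos.mpr hQu
      have hsvpos : 0 < sv := Real.sqrt_pos.mpr hQv
      have hsu2 : su^2 = 2*(u i*u j + u j*u k + u k*u i) - ((u i)^2+(u j)^2+(u k)^2) :=
        Real.sq_sqrt hQu.le
      have hsv2 : sv^2 = 2*(v i*v j + v j*v k + v k*v i) - ((v i)^2+(v j)^2+(v k)^2) :=
        Real.sq_sqrt hQv.le
      -- cot formulas, all six
      have cui : Real.cot (faceAngle m u {i,j,k} i) = (u j + u k - u i) / su :=
        cot_formula m u i j k hij hik hjk (hu.1 i) (hu.1 j) (hu.1 k) tu1 tu2 tu3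
      have cvi : Real.cot (faceAngle m v {i,j,k} i) = (v j + v k - v i) / sv :=
        cot_formula m v i j k hij hik hjk (hv.1 i) (hv.1 j) (hv.1 k) tv1 tv2 tv3
      have cuj : Real.cot (faceAngle m u {i,j,k} j) = (u i + u k - u j) / su := by
        rw [perm213 i j k]
        rw [cot_formula m u j i k hij.symm hjk hik (hu.1 j) (hu.1 i) (hu.1 k) tu2 tu1 tu3']
        rw [hsu]
        congr 2
        ring
      have cvj : Real.cot (faceAngle m v {i,j,k} j) = (v i + v k - v j) / sv := by
        rw [perm213 i j k]
        rw [cot_formula m v j i k hij.symm hjk hik (hv.1 j) (hv.1 i) (hv.1 k) tv2 tv1 tv3']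
        rw [hsv]
        congr 2
        ring
      have cuk : Real.cot (faceAngle m u {i,j,k} k) = (u i + u j - u k) / su := by
        rw [perm312 i j k]
        rw [cot_formula m u k i j hik.symm hjk.symm hij (hu.1 k) (hu.1 i) (hu.1 j) tu3 tu1' tu2']
        rw [hsu]
        congr 2
        ring
      have cvk : Real.cot (faceAngle m v {i,j,k} k) = (v i + v j - v k) / sv := by
        rw [perm312 i j k]
        rw [cot_formula m v k i j hik.symm hjk.symm hij (hv.1 k) (hv.1 i) (hv.1 j) tv3 tv1' tv2']
        rw [hsv]
        congr 2
        ring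
      have hsumT : ∑ e ∈ ({i,j,k} : Finset (Fin m)), g {i,j,k} e
          = ((u j + u k - u i)/su - (v j + v k - v i)/sv)*(u i - v i)
            + ((u i + u k - u j)/su - (v i + v k - v j)/sv)*(u j - v j)
            + ((u i + u j - u k)/su - (v i + v j - v k)/sv)*(u k - v k) := by
        rw [show ({i,j,k} : Finset (Fin m)) = insert i {j,k} from rfl]
        rw [Finset.sum_insert (by simp [hij, hik]), Finset.sum_pair hjk]
        rw [hg]
        simp only
        rw [cui, cvi, cuj, cvj, cuk, cvk]
        ring
      constructor
      · rw [hsumT]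
        exact face_T_nonpos (u i) (u j) (u k) (v i) (v j) (v k) su sv
          (hu.1 i) (hu.1 j) (hu.1 k) (hv.1 i) (hv.1 j) (hv.1 k)
          hsupos hsvpos hsu2 hsv2
      · intro hT
        rw [hsumT] at hT
        obtain ⟨α, hαpos, h1, h2, h3⟩ := face_T_eq (u i) (u j) (u k) (v i) (v j) (v k) su sv
          (hu.1 i) (hu.1 j) (hu.1 k) (hv.1 i) (hv.1 j) (hv.1 k)
          hsupos hsvpos hsu2 hsv2 hT
        refine ⟨α, hαpos, ?_⟩
        intro e he
        simp only [Finset.mem_insert, Finset.mem_singleton] at he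
        rcases he with rfl | rfl | rfl
        · exact h1
        · exact h2
        · exact h3
    have hzero : ∀ f ∈ F, ∑ e ∈ f, g f e = 0 :=
      (Finset.sum_eq_zero_iff_of_nonpos (fun f hf => (hkey f hf).1)).mp hsum
    have hratio : ∀ f ∈ F, ∃ α : ℝ, 0 < α ∧ ∀ e ∈ f, v e = α * u e :=
      fun f hf => (hkey f hf).2 (hzero f hf)
    -- connectivity propagation
    obtain ⟨⟨f0, hf0⟩⟩ := hconn.nonempty
    obtain ⟨c, hcpos, hcf0⟩ := hratio f0 hf0
    have step : ∀ (x y : {f : Finset (Fin m) // f ∈ F}) (w : (faceGraph m F).Walk x y),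
        (∀ e ∈ (x : Finset (Fin m)), v e = c * u e) →
        (∀ e ∈ (y : Finset (Fin m)), v e = c * u e) := by
      intro x y w
      induction w with
      | nil => exact id
      | cons hadj p ih =>
        rename_i x' b' y'
        intro hx
        apply ih
        obtain ⟨hne, s, hs⟩ := hadj
        rw [Finset.mem_inter] at hs
        obtain ⟨β, hβpos, hβ⟩ := hratio b' b'.2
        have hβc : β = c := by
          have h1 := hβ s hs.2
          have h2 := hx s hs.1
          have h3 : β * u s = c * u s := by rw [← h1, ← h2]
          exact mul_right_cancel₀ (hu.1 s).ne' h3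
        intro e he
        rw [hβ e he, hβc]
    have main : ∀ e : Fin m, v e = c * u e := by
      intro e
      obtain ⟨f, hfF, hef⟩ := hcover e
      obtain ⟨w⟩ := hconn ⟨f0, hf0⟩ ⟨f, hfF⟩
      exact step ⟨f0, hf0⟩ ⟨f, hfF⟩ w hcf0 e hef
    exact ⟨c, hcpos, main⟩
  · rintro ⟨c, hc, hvc⟩ e
    rw [cotWeight, cotWeight]
    congr 1
    apply Finset.sum_congr rfl
    intro f hf
    rw [Finset.mem_filter] at hf
    obtain ⟨i, j, k, hij, hik, hjk, rfl⟩ := face_decomp f (hF f hf.1)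
    rw [scale_faceAngle m u v c hc hvc i j k e hij hik hjk hf.2]
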